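/- arXiv:1909.06334 — 2 statements merged into one kernel-verified Lean document; each statement's English description precedes it below -/
import Mathlib

section
/- For each fixed integer k ≥ 1, lim_{N→∞} ∫_{(−√N,∞)^k} ∏_{j=1}^k exp(−√N t_j + N log(1 + t_j/√N)) Δ(t)² dt = ∫_{ℝ^k} ∏_{j=1}^k e^{−t_j²/2} Δ(t)² dt, where N → ∞ through the positive integers. -/
set_option maxHeartbeats 1000000

open MeasureTheory Real Complex Filter

/-- Vandermonde product `∏_{i<j} (t j - t i)` for a real vector. -/
noncomputable def vandermonde {k : ℕ} (t : Fin k → ℝ) : ℝ :=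
  ∏ i : Fin k, ∏ j ∈ Finset.Ioi i, (t j - t i)

section Aux
open Set

lemma log_quad_neg {u : ℝ} (h1 : -1 < u) (h2 : u ≤ 0) :
    Real.log (1 + u) ≤ u - u ^ 2 / 2 := by
  set f : ℝ → ℝ := fun v => v - v ^ 2 / 2 - Real.log (1 + v) with hf
  have hd : ∀ y ∈ Set.Ioo (-1 : ℝ) 0, HasDerivAt f (-(y ^ 2) / (1 + y)) y := by
    intro y hy
    have hy1 : (1 : ℝ) + y ≠ 0 := by nlinarith [hy.1]
    have h : HasDerivAt f (1 - 2 * y ^ 1 / 2 - 1 / (1 + y)) y :=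
      ((hasDerivAt_id y).sub ((hasDerivAt_pow 2 y).div_const 2)).sub
        (((hasDerivAt_id y).const_add 1).log hy1)
    convert h using 1
    field_simp
    ring
  have hanti : AntitoneOn f (Set.Ioc (-1 : ℝ) 0) := by
    apply antitoneOn_of_deriv_nonpos (convex_Ioc _ _)
    · apply ContinuousOn.sub
      · exact continuousOn_id.sub ((continuous_pow 2).continuousOn.div_const 2)
      · exact ContinuousOn.log (continuous_const.add continuous_id).continuousOn
          (fun x hx => by nlinarith [hx.1])
    · intro y hy
      rw [interior_Ioc] at hy
      exact (hd y hy).differentiableAt.differentiableWithinAt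
    · intro y hy
      rw [interior_Ioc] at hy
      rw [(hd y hy).deriv]
      apply div_nonpos_of_nonpos_of_nonneg
      · simpa using sq_nonneg y
      · nlinarith [hy.1]
  have h0 : f 0 ≤ f u := hanti ⟨h1, h2⟩ ⟨by norm_num, le_refl 0⟩ h2
  simp only [hf, Real.log_one] at h0
  norm_num at h0
  linarith

lemma log_quad_pos {u : ℝ} (h : 0 ≤ u) :
    Real.log (1 + u) ≤ u - u ^ 2 / (2 * (1 + u)) := by
  set f : ℝ → ℝ := fun v => v - v ^ 2 / (2 * (1 + v)) - Real.log (1 + v) with hf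
  have hd : ∀ y ∈ Set.Ioi (0 : ℝ), HasDerivAt f (y ^ 2 / (2 * (1 + y) ^ 2)) y := by
    intro y hy
    have hy0 : (0 : ℝ) < y := hy
    have hy1 : (1 : ℝ) + y ≠ 0 := by positivity
    have hy2 : (2 : ℝ) * (1 + y) ≠ 0 := by positivity
    have h : HasDerivAt f
        (1 - ((2 * y ^ 1) * (2 * (1 + y)) - y ^ 2 * (2 * 1)) / (2 * (1 + y)) ^ 2
          - 1 / (1 + y)) y := by
      refine HasDerivAt.sub (HasDerivAt.sub (hasDerivAt_id y) ?_)
        (((hasDerivAt_id y).const_add 1).log hy1)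
      exact (hasDerivAt_pow 2 y).div (((hasDerivAt_id y).const_add 1).const_mul 2) hy2
    convert h using 1
    field_simp
    ring
  have hmono : MonotoneOn f (Set.Ici (0 : ℝ)) := by
    apply monotoneOn_of_deriv_nonneg (convex_Ici _)
    · apply ContinuousOn.sub
      · apply ContinuousOn.sub continuousOn_id
        apply ContinuousOn.div (continuous_pow 2).continuousOn
          (continuous_const.mul (continuous_const.add continuous_id)).continuousOn
        intro x hx
        have : (0:ℝ) ≤ x := hx
        show (2:ℝ) * (1 + x) ≠ 0
        positivity
      · exact ContinuousOn.log (continuous_const.add continuous_id).continuousOn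
          (fun x hx => by have : (0:ℝ) ≤ x := hx; positivity)
    · intro y hy
      rw [interior_Ici] at hy
      exact (hd y hy).differentiableAt.differentiableWithinAt
    · intro y hy
      rw [interior_Ici] at hy
      rw [(hd y hy).deriv]
      have : (0:ℝ) < y := hy
      positivity
  have h0 : f 0 ≤ f u := hmono Set.self_mem_Ici h h
  simp only [hf, Real.log_one] at h0
  norm_num at h0
  linarith


lemma key_lin_bound (N : ℕ) (hN : 1 ≤ N) (x : ℝ) (hx : -Real.sqrt N < x) :
    -Real.sqrt N * x + N * Real.log (1 + x / Real.sqrt N) ≤ 1 / 2 - |x| / 2 := by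
  set s : ℝ := Real.sqrt N with hs
  have hs1 : 1 ≤ s := by
    rw [hs, show (1:ℝ) = Real.sqrt 1 by simp]
    exact Real.sqrt_le_sqrt (by exact_mod_cast hN)
  have hs0 : 0 < s := by linarith
  have hsq : s ^ 2 = (N : ℝ) := Real.sq_sqrt (Nat.cast_nonneg N)
  have hu1 : -1 < x / s := by
    rw [lt_div_iff₀ hs0]
    nlinarith
  rcases le_or_gt x 0 with hx0 | hx0
  · -- x ≤ 0
    have hu0 : x / s ≤ 0 := div_nonpos_of_nonpos_of_nonneg hx0 hs0.le
    have hlog := log_quad_neg hu1 hu0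
    have h2 : (N : ℝ) * Real.log (1 + x / s) ≤ s ^ 2 * (x / s - (x / s) ^ 2 / 2) := by
      rw [← hsq]
      exact mul_le_mul_of_nonneg_left hlog (by positivity)
    have h3 : s ^ 2 * (x / s - (x / s) ^ 2 / 2) = s * x - x ^ 2 / 2 := by
      field_simp
    rw [_root_.abs_of_nonpos hx0]
    nlinarith [sq_nonneg (x + 1)]
  · -- x > 0
    have hu0 : 0 ≤ x / s := by positivity
    have hlog := log_quad_pos hu0
    have h2 : (N : ℝ) * Real.log (1 + x / s) ≤
        s ^ 2 * (x / s - (x / s) ^ 2 / (2 * (1 + x / s))) := by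
      rw [← hsq]
      exact mul_le_mul_of_nonneg_left hlog (by positivity)
    have hsx : 0 < s + x := by linarith
    have h3 : s ^ 2 * (x / s - (x / s) ^ 2 / (2 * (1 + x / s))) =
        s * x - x ^ 2 * s / (2 * (s + x)) := by
      have : 1 + x / s = (s + x) / s := by field_simp
      rw [this]
      field_simp
    have h4 : (x - 1) / 2 ≤ x ^ 2 * s / (2 * (s + x)) := by
      rw [div_le_div_iff₀ (by norm_num) (by positivity)]
      nlinarith [mul_nonneg (sub_nonneg.2 hs1) (by nlinarith : (0:ℝ) ≤ x ^ 2 - x + 1)]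
    rw [_root_.abs_of_pos hx0]
    nlinarith

lemma key_exp_bound (N : ℕ) (hN : 1 ≤ N) (x : ℝ) (hx : -Real.sqrt N < x) :
    Real.exp (-Real.sqrt N * x + N * Real.log (1 + x / Real.sqrt N)) ≤
      2 * Real.exp (-|x| / 2) := by
  have h1 := key_lin_bound N hN x hx
  have h2 : Real.exp (-Real.sqrt N * x + N * Real.log (1 + x / Real.sqrt N)) ≤
      Real.exp (1 / 2) * Real.exp (-|x| / 2) := by
    rw [← Real.exp_add]
    exact Real.exp_le_exp.mpr (by linarith)
  have h3 : Real.exp (1 / 2 : ℝ) ≤ 2 := by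
    nlinarith [Real.exp_one_lt_d9, Real.exp_pos (1/2 : ℝ),
      (Real.exp_add (1/2) (1/2)).symm, Real.exp_one_gt_d9]
  nlinarith [Real.exp_pos (-|x| / 2)]

lemma sqrt_nat_tendsto : Tendsto (fun N : ℕ => Real.sqrt N) atTop atTop := by
  apply Filter.tendsto_atTop.mpr
  intro b
  filter_upwards [Filter.eventually_ge_atTop (⌈b ^ 2⌉₊)] with N hN
  rcases le_or_gt b 0 with hb | hb
  · exact hb.trans (Real.sqrt_nonneg _)
  · rw [show b = Real.sqrt (b ^ 2) by rw [Real.sqrt_sq hb.le]]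
    apply Real.sqrt_le_sqrt
    calc b ^ 2 ≤ (⌈b ^ 2⌉₊ : ℝ) := Nat.le_ceil _
    _ ≤ (N : ℝ) := by exact_mod_cast hN

lemma tendsto_inner (x : ℝ) :
    Tendsto (fun N : ℕ => -Real.sqrt N * x + N * Real.log (1 + x / Real.sqrt N)) atTop
      (nhds (-x ^ 2 / 2)) := by
  rw [tendsto_iff_norm_sub_tendsto_zero]
  apply squeeze_zero' (g := fun N : ℕ => 2 * |x| ^ 3 / Real.sqrt N)
      (Filter.Eventually.of_forall fun N => norm_nonneg _)
  · filter_upwards [sqrt_nat_tendsto.eventually_ge_atTop (2 * |x| + 1)] with N hsN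
    set s : ℝ := Real.sqrt N with hs
    have hs1 : (1:ℝ) ≤ s := by nlinarith [abs_nonneg x]
    have hs0 : (0:ℝ) < s := by linarith
    have hN : (N : ℝ) = s ^ 2 := (Real.sq_sqrt (Nat.cast_nonneg N)).symm
    have hu : |x / s| ≤ 1 / 2 := by
      rw [abs_div, _root_.abs_of_pos hs0, div_le_iff₀ hs0]
      nlinarith [abs_nonneg x]
    have hu1 : |(-(x / s))| < 1 := by rw [abs_neg]; linarith
    have key := Real.abs_log_sub_add_sum_range_le hu1 2
    rw [Finset.sum_range_succ, Finset.sum_range_one] at key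
    have hsum : ((-(x / s)) ^ (0 + 1) / ((0:ℕ) + 1) + (-(x / s)) ^ (1 + 1) / ((1:ℕ) + 1))
        = -(x / s) + (x / s) ^ 2 / 2 := by push_cast; ring
    rw [hsum] at key
    have hlog1 : (1 : ℝ) - -(x / s) = 1 + x / s := by ring
    rw [hlog1, abs_neg] at key
    have hident : -s * x + (N : ℝ) * Real.log (1 + x / s) - -x ^ 2 / 2
        = (N : ℝ) * ((-(x / s) + (x / s) ^ 2 / 2) + Real.log (1 + x / s)) := by
      rw [hN]; field_simp; ring
    rw [Real.norm_eq_abs, hident, abs_mul]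
    have hNn : |(N : ℝ)| = s ^ 2 := by rw [hN]; exact _root_.abs_of_nonneg (by positivity)
    rw [hNn]
    have h2 : |(-(x / s) + (x / s) ^ 2 / 2) + Real.log (1 + x / s)| ≤ 2 * |x / s| ^ 3 := by
      calc _ ≤ |x / s| ^ (2 + 1) / (1 - |x / s|) := key
      _ ≤ 2 * |x / s| ^ 3 := by
          rw [div_le_iff₀ (by linarith)]
          nlinarith [abs_nonneg (x / s), pow_nonneg (abs_nonneg (x / s)) 3]
    calc s ^ 2 * |(-(x / s) + (x / s) ^ 2 / 2) + Real.log (1 + x / s)|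
        ≤ s ^ 2 * (2 * |x / s| ^ 3) := by
          exact mul_le_mul_of_nonneg_left h2 (by positivity)
      _ = 2 * |x| ^ 3 / s := by
          rw [abs_div, _root_.abs_of_pos hs0]
          field_simp
  · exact Tendsto.div_atTop tendsto_const_nhds sqrt_nat_tendsto



lemma int_exp_abs : Integrable (fun x : ℝ => Real.exp (-(|x| / 4))) := by
  have h1 : IntegrableOn (fun x : ℝ => Real.exp (-(|x| / 4))) (Set.Ioi (0:ℝ)) := by
    apply (exp_neg_integrableOn_Ioi (0:ℝ) (by norm_num : (0:ℝ) < 1/4)).congr_fun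
      (fun x hx => ?_) measurableSet_Ioi
    rw [_root_.abs_of_pos hx]
    ring_nf
  have h2 : IntegrableOn (fun x : ℝ => Real.exp (-(|x| / 4))) (Set.Iic (0:ℝ)) := by
    rw [← Measure.map_neg_eq_self (volume : Measure ℝ)]
    have m : MeasurableEmbedding (Neg.neg : ℝ → ℝ) := (Homeomorph.neg ℝ).measurableEmbedding
    rw [m.integrableOn_map_iff]
    simp_rw [Function.comp_def, abs_neg, neg_preimage, neg_Iic, neg_zero]
    exact (integrableOn_Ici_iff_integrableOn_Ioi).mpr h1
  have := h2.union h1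
  rwa [Set.Iic_union_Ioi, integrableOn_univ] at this

lemma int1d (m : ℕ) :
    Integrable (fun x : ℝ => 2 * Real.exp (-|x| / 2) * (1 + |x|) ^ m) := by
  set c : ℝ := 4 * m + 4 with hc
  have hc0 : (0:ℝ) < c := by positivity
  apply Integrable.mono' ((int_exp_abs.const_mul (2 * c ^ m)))
  · apply Continuous.aestronglyMeasurable
    exact ((continuous_const.mul ((_root_.continuous_abs.neg.div_const 2).rexp))).mul
      ((continuous_const.add _root_.continuous_abs).pow m)
  · refine ae_of_all _ fun x => ?_
    have hc4 : (4:ℝ) ≤ c := by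
      rw [hc]; nlinarith [Nat.cast_nonneg (α := ℝ) m]
    have hb : 1 + |x| ≤ c * Real.exp (|x| / c) := by
      have h := Real.add_one_le_exp (|x| / c)
      have hcx : c * (|x| / c) = |x| := by field_simp
      nlinarith [abs_nonneg x, mul_le_mul_of_nonneg_left h hc0.le]
    have hb2 : (1 + |x|) ^ m ≤ c ^ m * Real.exp ((m : ℝ) * (|x| / c)) := by
      calc (1 + |x|) ^ m ≤ (c * Real.exp (|x| / c)) ^ m :=
            pow_le_pow_left₀ (by positivity) hb m
      _ = c ^ m * Real.exp ((m : ℝ) * (|x| / c)) := by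
          rw [mul_pow, ← Real.exp_nat_mul]
    have hb3 : Real.exp ((m : ℝ) * (|x| / c)) ≤ Real.exp (|x| / 4) := by
      apply Real.exp_le_exp.mpr
      rw [mul_div_assoc'] at *
      rw [div_le_div_iff₀ hc0 (by norm_num)]
      nlinarith [abs_nonneg x]
    have hnorm : ‖2 * Real.exp (-|x| / 2) * (1 + |x|) ^ m‖
        = 2 * Real.exp (-|x| / 2) * (1 + |x|) ^ m := by
      apply _root_.abs_of_nonneg; positivity
    rw [hnorm]
    have : 2 * Real.exp (-|x| / 2) * (1 + |x|) ^ m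
        ≤ 2 * Real.exp (-|x| / 2) * (c ^ m * Real.exp (|x| / 4)) := by
      apply mul_le_mul_of_nonneg_left (hb2.trans ?_) (by positivity)
      exact mul_le_mul_of_nonneg_left hb3 (by positivity)
    calc 2 * Real.exp (-|x| / 2) * (1 + |x|) ^ m
        ≤ 2 * Real.exp (-|x| / 2) * (c ^ m * Real.exp (|x| / 4)) := this
      _ = 2 * c ^ m * Real.exp (-(|x| / 4)) := by
          rw [show -(|x| / 4) = -|x| / 2 + |x| / 4 by ring, Real.exp_add]
          ring


lemma one_le_prod_real {α : Type*} (s : Finset α) (f : α → ℝ) (hf : ∀ m ∈ s, 1 ≤ f m) :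
    1 ≤ ∏ m ∈ s, f m := by
  simpa using Finset.prod_le_prod (fun i _ => zero_le_one) hf

lemma prod_subset_le_real {α : Type*} [DecidableEq α] {s t : Finset α} (hst : s ⊆ t) (f : α → ℝ)
    (hf : ∀ m ∈ t, 1 ≤ f m) : ∏ m ∈ s, f m ≤ ∏ m ∈ t, f m := by
  rw [← Finset.prod_sdiff hst]
  apply le_mul_of_one_le_left
  · exact Finset.prod_nonneg fun i hi => le_trans zero_le_one (hf i (hst hi))
  · exact one_le_prod_real _ _ fun m hm => hf m (Finset.mem_sdiff.mp hm).1

lemma vand_sq_le {k : ℕ} (t : Fin k → ℝ) :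
    vandermonde t ^ 2 ≤ ∏ j, (1 + |t j|) ^ (2 * (k * k)) := by
  set P : ℝ := ∏ m, (1 + |t m|) with hP
  have honeple : ∀ m : Fin k, (1:ℝ) ≤ 1 + |t m| := fun m => by linarith [abs_nonneg (t m)]
  have hP1 : (1:ℝ) ≤ P := by
    rw [hP]
    exact one_le_prod_real _ _ fun m _ => honeple m
  have h1 : |vandermonde t| ≤ P ^ (k * k) := by
    rw [vandermonde, Finset.abs_prod]
    have : ∀ i : Fin k, |∏ j ∈ Finset.Ioi i, (t j - t i)| ≤ P ^ k := by
      intro i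
      rw [Finset.abs_prod]
      calc ∏ j ∈ Finset.Ioi i, |t j - t i| ≤ ∏ j ∈ Finset.Ioi i, P := by
            apply Finset.prod_le_prod (fun j _ => abs_nonneg _)
            intro j hj
            have hne : i ≠ j := (Finset.mem_Ioi.mp hj).ne'.symm
            have : |t j - t i| ≤ (1 + |t i|) * (1 + |t j|) := by
              have := abs_sub_abs_le_abs_sub (t j) (t i)
              have h := abs_sub (t j) (t i)
              nlinarith [abs_nonneg (t i), abs_nonneg (t j), abs_sub_le (t j) 0 (t i)]
            calc |t j - t i| ≤ (1 + |t i|) * (1 + |t j|) := this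
              _ = ∏ m ∈ ({i, j} : Finset (Fin k)), (1 + |t m|) := by
                  rw [Finset.prod_pair hne]
              _ ≤ P := by
                  rw [hP]
                  exact prod_subset_le_real (Finset.subset_univ _) _ fun m _ => honeple m
        _ ≤ ∏ _j ∈ (Finset.univ : Finset (Fin k)), P :=
            prod_subset_le_real (Finset.subset_univ _) _ fun m _ => hP1
        _ = P ^ k := by rw [Finset.prod_const, Finset.card_univ, Fintype.card_fin]
    calc ∏ i, |∏ j ∈ Finset.Ioi i, (t j - t i)|
        ≤ ∏ _i : Fin k, P ^ k :=
          Finset.prod_le_prod (fun i _ => abs_nonneg _) (fun i _ => this i)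
      _ = P ^ (k * k) := by
          rw [Finset.prod_const, Finset.card_univ, Fintype.card_fin, ← pow_mul]
  calc vandermonde t ^ 2 = |vandermonde t| ^ 2 := (_root_.sq_abs _).symm
    _ ≤ (P ^ (k * k)) ^ 2 := pow_le_pow_left₀ (abs_nonneg _) h1 2
    _ = ∏ j, (1 + |t j|) ^ (2 * (k * k)) := by
        rw [← pow_mul, mul_comm (k * k) 2, hP, ← Finset.prod_pow]

end Aux

section Main
open Set

/-- convergence of the rescaled Laguerre-type integral over
`(-√N,∞)^k` to the Gaussian (GUE) Selberg integral, as `N → ∞` through ℕ. -/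
theorem stmt_3 (k : ℕ) (hk : 1 ≤ k) :
    Filter.Tendsto
      (fun N : ℕ =>
        ∫ t in Set.univ.pi fun _ : Fin k => Set.Ioi (-Real.sqrt N),
          (∏ j, Real.exp (-Real.sqrt N * t j + N * Real.log (1 + t j / Real.sqrt N))) *
            vandermonde t ^ 2)
      Filter.atTop
      (nhds (∫ t : Fin k → ℝ, (∏ j, Real.exp (-(t j) ^ 2 / 2)) * vandermonde t ^ 2)) := by
  have hvand : Continuous (vandermonde : (Fin k → ℝ) → ℝ) := by
    unfold vandermonde
    exact continuous_finset_prod _ fun i _ =>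
      continuous_finset_prod _ fun j _ => (continuous_apply j).sub (continuous_apply i)
  set S : ℕ → Set (Fin k → ℝ) :=
    fun N => Set.univ.pi fun _ : Fin k => Set.Ioi (-Real.sqrt N) with hS
  have hSm : ∀ N, MeasurableSet (S N) :=
    fun N => MeasurableSet.univ_pi fun _ => measurableSet_Ioi
  set G : ℕ → (Fin k → ℝ) → ℝ := fun N t =>
    (∏ j, Real.exp (-Real.sqrt N * t j + N * Real.log (1 + t j / Real.sqrt N))) *
      vandermonde t ^ 2 with hG
  set F : ℕ → (Fin k → ℝ) → ℝ := fun N => (S N).indicator (G N) with hF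
  have hFeq : ∀ N : ℕ, (∫ t in S N, G N t) = ∫ t, F N t :=
    fun N => (integral_indicator (hSm N)).symm
  simp only [hS] at hFeq
  rw [show (fun N : ℕ =>
        ∫ t in Set.univ.pi fun _ : Fin k => Set.Ioi (-Real.sqrt N),
          (∏ j, Real.exp (-Real.sqrt N * t j + N * Real.log (1 + t j / Real.sqrt N))) *
            vandermonde t ^ 2) = fun N : ℕ => ∫ t, F N t from funext hFeq]
  apply tendsto_integral_filter_of_dominated_convergence
    (bound := fun t => (∏ j, 2 * Real.exp (-|t j| / 2)) * vandermonde t ^ 2)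
  · -- measurability
    apply Filter.Eventually.of_forall
    intro N
    apply AEStronglyMeasurable.indicator _ (hSm N)
    apply Measurable.aestronglyMeasurable
    apply Measurable.mul
    · apply Finset.measurable_prod
      intro j _
      apply Real.measurable_exp.comp
      exact ((measurable_pi_apply j).const_mul _).add
        ((Real.measurable_log.comp (((measurable_pi_apply j).div_const _).const_add 1)).const_mul _)
    · exact hvand.measurable.pow_const 2
  · -- bound
    filter_upwards [eventually_ge_atTop 1] with N hN
    apply ae_of_all
    intro t
    by_cases ht : t ∈ S N
    · show ‖(S N).indicator (G N) t‖ ≤ _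
      rw [Set.indicator_of_mem ht, hG, Real.norm_eq_abs,
        _root_.abs_of_nonneg (mul_nonneg (Finset.prod_nonneg fun j _ => (Real.exp_pos _).le)
          (sq_nonneg _))]
      apply mul_le_mul_of_nonneg_right _ (sq_nonneg _)
      apply Finset.prod_le_prod (fun j _ => (Real.exp_pos _).le)
      intro j _
      exact key_exp_bound N hN (t j) (Set.mem_univ_pi.mp ht j)
    · show ‖(S N).indicator (G N) t‖ ≤ _
      rw [Set.indicator_of_notMem ht, norm_zero]
      exact mul_nonneg (Finset.prod_nonneg fun j _ => by positivity) (sq_nonneg _)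
  · -- integrable bound
    apply Integrable.mono'
      (Integrable.fintype_prod
        (f := fun (_ : Fin k) (x : ℝ) => 2 * Real.exp (-|x| / 2) * (1 + |x|) ^ (2 * (k * k)))
        fun _ => int1d _)
    · apply Continuous.aestronglyMeasurable
      exact (continuous_finset_prod _ fun j _ => continuous_const.mul
        (((continuous_apply j).abs.neg.div_const 2).rexp)).mul (hvand.pow 2)
    · apply ae_of_all
      intro t
      have h0 : (0:ℝ) ≤ ∏ j, 2 * Real.exp (-|t j| / 2) :=
        Finset.prod_nonneg fun j _ => by positivity
      rw [Real.norm_eq_abs, _root_.abs_of_nonneg (mul_nonneg h0 (sq_nonneg _))]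
      calc (∏ j, 2 * Real.exp (-|t j| / 2)) * vandermonde t ^ 2
          ≤ (∏ j, 2 * Real.exp (-|t j| / 2)) * ∏ j, (1 + |t j|) ^ (2 * (k * k)) :=
            mul_le_mul_of_nonneg_left (vand_sq_le t) h0
        _ = ∏ j, 2 * Real.exp (-|t j| / 2) * (1 + |t j|) ^ (2 * (k * k)) :=
            (Finset.prod_mul_distrib).symm
  · -- pointwise limit
    apply ae_of_all
    intro t
    have hmem : ∀ᶠ N : ℕ in atTop, t ∈ S N := by
      have h : ∀ j : Fin k, ∀ᶠ N : ℕ in atTop, -Real.sqrt N < t j := by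
        intro j
        filter_upwards [sqrt_nat_tendsto.eventually_gt_atTop (-(t j))] with N hN
        linarith
      filter_upwards [eventually_all.mpr h] with N hN
      exact Set.mem_univ_pi.mpr fun j => hN j
    apply Tendsto.congr' (show (fun N : ℕ => G N t) =ᶠ[atTop] fun N => F N t by
      filter_upwards [hmem] with N hN
      show G N t = (S N).indicator (G N) t
      rw [Set.indicator_of_mem hN])
    apply Tendsto.mul _ tendsto_const_nhds
    apply tendsto_finset_prod
    intro j _
    exact (Real.continuous_exp.continuousAt.tendsto.comp (tendsto_inner (t j)))

end Main
end

section
/- Let k ≥ 1 be an integer, let A : ℂ × ℂ → ℂ be analytic on a product of open neighborhoods of x ∈ ℂ and y ∈ ℂ, and for vectors x⃗ = (x₁,…,x_k) and y⃗ = (y₁,…,y_k) with pairwise distinct coordinates define Q(x⃗,y⃗) := det{ A(x_i, y_j) }_{i,j=1}^k / (Δ(x⃗)Δ(y⃗)). Then as (x⃗,y⃗) → ((x,…,x),(y,…,y)) through configurations with pairwise distinct coordinates, Q(x⃗,y⃗) converges to ( ∏_{j=0}^{k−1} (j!)^{−2} ) · det{ ∂^{i+j−2} A / ∂x^{i−1}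 ∂y^{j−1} (x,y) }_{i,j=1}^k. -/
open MeasureTheory Real Complex Filter

open Metric Finset in
/-- Parametric continuity of a circle integral. -/
theorem stmt17_cont_circle {X : Type*} [TopologicalSpace X] {c : ℂ} {R : ℝ} {f : X → ℂ → ℂ}
    (hf : Continuous fun q : X × ℝ => f q.1 (circleMap c R q.2)) :
    Continuous fun p : X => ∮ z in C(c, R), f p z := by
  simp only [circleIntegral, deriv_circleMap]
  exact intervalIntegral.continuous_parametric_intervalIntegral_of_continuous'
    (f := fun p θ => (circleMap 0 R θ * I) • f p (circleMap c R θ))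
    (by exact (((continuous_circleMap 0 R).comp continuous_snd).mul continuous_const).smul hf)
    0 (2 * π)

open Metric Finset in
/-- Cauchy integral formula for iterated derivatives. -/
theorem stmt17_cauchy_deriv {c : ℂ} {R : NNReal} (hR : 0 < R) {f : ℂ → ℂ}
    (hf : DifferentiableOn ℂ f (closedBall c R)) (n : ℕ) :
    (∮ z in C(c, (R : ℝ)), (z - c)⁻¹ ^ (n + 1) • f z) =
      (2 * π * I / n.factorial) * iteratedDeriv n f c := by
  have h := hf.hasFPowerSeriesOnBall hR
  have h1 := h.factorial_smul (1 : ℂ) n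
  rw [cauchyPowerSeries_apply] at h1
  have h3 : iteratedFDeriv ℂ n f c (fun _ => (1 : ℂ)) = iteratedDeriv n f c := by
    rw [iteratedDeriv_eq_iteratedFDeriv]
  rw [h3] at h1
  have he : (∮ z in C(c, (R : ℝ)), ((1 : ℂ) / (z - c)) ^ n • (z - c)⁻¹ • f z)
      = ∮ z in C(c, (R : ℝ)), (z - c)⁻¹ ^ (n + 1) • f z := by
    apply circleIntegral.integral_congr (by positivity)
    intro z hz
    simp only [smul_eq_mul, one_div, pow_succ]
    ring
  rw [he] at h1
  have hfac : ((n.factorial : ℂ)) ≠ 0 := by exact_mod_cast n.factorial_ne_zero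
  rw [nsmul_eq_mul, smul_eq_mul] at h1
  have h2pi : (2 * (π : ℂ) * I) ≠ 0 := by simp [Real.pi_ne_zero, Complex.I_ne_zero]
  rw [div_mul_eq_mul_div, eq_div_iff hfac, ← h1]
  field_simp

open Metric Finset in
theorem stmt17_cauchy_deriv' {c : ℂ} {ρ : ℝ} (hρ : 0 < ρ) {f : ℂ → ℂ}
    (hf : DifferentiableOn ℂ f (closedBall c ρ)) (n : ℕ) :
    (∮ z in C(c, ρ), (z - c)⁻¹ ^ (n + 1) • f z) =
      (2 * π * I / n.factorial) * iteratedDeriv n f c :=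
  stmt17_cauchy_deriv (R := ⟨ρ, hρ.le⟩) (by exact_mod_cast hρ) hf n

open Metric Finset in
theorem stmt17_circleIntegral_finset_sum {ι : Type*} (S : Finset ι) {c : ℂ} {R : ℝ}
    (f : ι → ℂ → ℂ) (hf : ∀ m ∈ S, CircleIntegrable (f m) c R) :
    (∮ z in C(c, R), ∑ m ∈ S, f m z) = ∑ m ∈ S, ∮ z in C(c, R), f m z := by
  simp only [circleIntegral, smul_sum]
  exact intervalIntegral.integral_finset_sum fun m hm => (hf m hm).out

open Metric Finset in
/-- Partial fractions decomposition. -/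
theorem stmt17_pfrac {ι : Type*} [DecidableEq ι] (t : ι → ℂ) (S : Finset ι)
    (hinj : Set.InjOn t S) (hS : S.Nonempty) (z : ℂ) (hz : ∀ m ∈ S, z ≠ t m) :
    ∏ m ∈ S, (z - t m)⁻¹ = ∑ m ∈ S, (∏ l ∈ S.erase m, (t m - t l))⁻¹ * (z - t m)⁻¹ := by
  have h1 := Lagrange.sum_basis hinj hS
  have h2 := congrArg (Polynomial.eval z) h1
  simp only [Polynomial.eval_finset_sum, Polynomial.eval_one] at h2
  have h3 : ∀ m ∈ S, Polynomial.eval z (Lagrange.basis S t m)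
      = (∏ l ∈ S.erase m, (t m - t l)⁻¹) * ∏ l ∈ S.erase m, (z - t l) := by
    intro m hm
    rw [Lagrange.basis, Polynomial.eval_prod, ← prod_mul_distrib]
    refine prod_congr rfl fun l hl => ?_
    rw [Lagrange.basisDivisor]
    simp [mul_comm]
  rw [sum_congr rfl h3] at h2
  have hne : ∀ l ∈ S, z - t l ≠ 0 := fun l hl => sub_ne_zero.mpr (hz l hl)
  have key : ∀ m ∈ S, ((∏ l ∈ S.erase m, (t m - t l)⁻¹) * ∏ l ∈ S.erase m, (z - t l))
      * (∏ l ∈ S, (z - t l))⁻¹ = (∏ l ∈ S.erase m, (t m - t l))⁻¹ * (z - t m)⁻¹ := by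
    intro m hm
    have h4 : (∏ l ∈ S.erase m, (z - t l)) ≠ 0 :=
      prod_ne_zero_iff.mpr fun l hl => hne l (mem_of_mem_erase hl)
    rw [← Finset.mul_prod_erase S _ hm, mul_inv]
    calc ((∏ l ∈ S.erase m, (t m - t l)⁻¹) * (∏ l ∈ S.erase m, (z - t l)))
          * ((z - t m)⁻¹ * (∏ l ∈ S.erase m, (z - t l))⁻¹)
        = ((∏ l ∈ S.erase m, (t m - t l)⁻¹) * (z - t m)⁻¹)
          * ((∏ l ∈ S.erase m, (z - t l)) * (∏ l ∈ S.erase m, (z - t l))⁻¹) := by ring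
      _ = (∏ l ∈ S.erase m, (t m - t l))⁻¹ * (z - t m)⁻¹ := by
          rw [mul_inv_cancel₀ h4, mul_one, prod_inv_distrib]
  calc ∏ m ∈ S, (z - t m)⁻¹ = 1 * (∏ l ∈ S, (z - t l))⁻¹ := by rw [one_mul, prod_inv_distrib]
    _ = (∑ m ∈ S, (∏ l ∈ S.erase m, (t m - t l)⁻¹) * ∏ l ∈ S.erase m, (z - t l))
        * (∏ l ∈ S, (z - t l))⁻¹ := by rw [h2]
    _ = _ := by
        rw [sum_mul]
        exact sum_congr rfl fun m hm => by rw [← key m hm]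

open Metric Finset in
/-- Cauchy formula with several simple poles. -/
theorem stmt17_cauchy_sum {c : ℂ} {ρ : ℝ} (hρ : 0 < ρ) {ι : Type*} [DecidableEq ι]
    (t : ι → ℂ) (S : Finset ι) (hS : S.Nonempty) (hinj : Set.InjOn t S)
    (hball : ∀ m ∈ S, t m ∈ ball c ρ)
    {g : ℂ → ℂ} (hg : DifferentiableOn ℂ g (closedBall c ρ)) :
    (∮ z in C(c, ρ), (∏ m ∈ S, (z - t m)⁻¹) • g z)
      = ∑ m ∈ S, (∏ l ∈ S.erase m, (t m - t l))⁻¹ * ((2 * π * I) * g (t m)) := by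
  have hzm : ∀ z ∈ sphere c ρ, ∀ m ∈ S, z ≠ t m := by
    intro z hz m hm h
    subst h
    exact absurd (mem_ball.mp (hball _ hm)) (by simp [mem_sphere.mp hz])
  have hcont : ContinuousOn g (sphere c ρ) := hg.continuousOn.mono sphere_subset_closedBall
  have h1 : Set.EqOn (fun z => (∏ m ∈ S, (z - t m)⁻¹) • g z)
      (fun z => ∑ m ∈ S, ((∏ l ∈ S.erase m, (t m - t l))⁻¹ * (z - t m)⁻¹) • g z)
      (sphere c ρ) := by
    intro z hz
    simp only [smul_eq_mul]
    rw [stmt17_pfrac t S hinj hS z (hzm z hz), sum_mul]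
  rw [circleIntegral.integral_congr hρ.le h1]
  rw [stmt17_circleIntegral_finset_sum S _ (fun m hm => ?_)]
  · refine sum_congr rfl fun m hm => ?_
    have he : Set.EqOn (fun z => ((∏ l ∈ S.erase m, (t m - t l))⁻¹ * (z - t m)⁻¹) • g z)
        (fun z => (∏ l ∈ S.erase m, (t m - t l))⁻¹ • ((z - t m)⁻¹ • g z)) (sphere c ρ) := by
      intro z hz; simp only [smul_eq_mul]; ring
    rw [circleIntegral.integral_congr hρ.le he, circleIntegral.integral_smul,
      hg.circleIntegral_sub_inv_smul (hball m hm)]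
    simp only [smul_eq_mul]
  · apply ContinuousOn.circleIntegrable hρ.le
    apply ContinuousOn.fun_smul _ hcont
    apply ContinuousOn.mul continuousOn_const
    apply ContinuousOn.inv₀ (by fun_prop)
    intro z hz
    exact sub_ne_zero.mpr (hzm z hz m hm)

open Metric Finset in
/-- Analytic extension of iterated partial derivatives in the second variable. -/
theorem stmt17_partialAj {U V : Set ℂ} (hV : IsOpen V) {A : ℂ × ℂ → ℂ}
    (hA : AnalyticOnNhd ℂ A (U ×ˢ V)) (j : ℕ) :
    ∃ Aj : ℂ × ℂ → ℂ, AnalyticOnNhd ℂ Aj (U ×ˢ V) ∧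
      ∀ a ∈ U, ∀ b ∈ V, Aj (a, b) = iteratedDeriv j (fun b' => A (a, b')) b := by
  induction j with
  | zero => exact ⟨A, hA, fun a _ b _ => by simp [iteratedDeriv_zero]⟩
  | succ j ih =>
    obtain ⟨Aj, hAj, hAjeq⟩ := ih
    refine ⟨fun p => fderiv ℂ Aj p (0, 1), ?_, ?_⟩
    · exact (ContinuousLinearMap.apply ℂ ℂ ((0 : ℂ), (1 : ℂ))).comp_analyticOnNhd hAj.fderiv
    · intro a ha b hb
      rw [iteratedDeriv_succ]
      have heq : (fun b' => Aj (a, b'))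
          =ᶠ[nhds b] (fun b' => iteratedDeriv j (fun b'' => A (a, b'')) b') := by
        filter_upwards [hV.mem_nhds hb] with b' hb' using hAjeq a ha b' hb'
      have hd : HasDerivAt (fun b' => Aj (a, b')) (fderiv ℂ Aj (a, b) (0, 1)) b := by
        have h1 : HasFDerivAt Aj (fderiv ℂ Aj (a, b)) (a, b) :=
          (hAj (a, b) ⟨ha, hb⟩).differentiableAt.hasFDerivAt
        have h2 : HasDerivAt (fun b' => ((a : ℂ), b')) ((0 : ℂ), (1 : ℂ)) b :=
          (hasDerivAt_const b a).prodMk (hasDerivAt_id b)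
        exact h1.comp_hasDerivAt b h2
      rw [← heq.deriv_eq, hd.deriv]

/-- The inner (w-)circle integral. -/
noncomputable def stmt17_H {k : ℕ} (A : ℂ × ℂ → ℂ) (y : ℂ) (s : ℝ) (j : Fin k) :
    ℂ × (Fin k → ℂ) → ℂ :=
  fun q => ∮ w in C(y, s), (∏ n ∈ Finset.Iic j, (w - q.2 n)⁻¹) • A (q.1, w)

/-- The outer (z-)circle integral. -/
noncomputable def stmt17_F {k : ℕ} (A : ℂ × ℂ → ℂ) (x y : ℂ) (r s : ℝ) (i j : Fin k) :
    (Fin k → ℂ) × (Fin k → ℂ) → ℂ :=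
  fun p => ∮ z in C(x, r), (∏ m ∈ Finset.Iic i, (z - p.1 m)⁻¹) • stmt17_H A y s j (z, p.2)

/-- Vandermonde product for a complex vector. -/
noncomputable def vandermondeC {k : ℕ} (t : Fin k → ℂ) : ℂ :=
  ∏ i : Fin k, ∏ j ∈ Finset.Ioi i, (t j - t i)

open Metric Finset in
theorem stmt17_vdm {k : ℕ} (t : Fin k → ℂ) :
    vandermondeC t = ∏ i : Fin k, ∏ l ∈ Finset.Iio i, (t i - t l) := by
  rw [vandermondeC]
  exact Finset.prod_comm' (fun a b => by simp [mem_Ioi, mem_Iio, and_comm])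


/-- Lower-triangular matrix of partial-fraction coefficients. -/
noncomputable def stmt17_L {k : ℕ} (t : Fin k → ℂ) : Matrix (Fin k) (Fin k) ℂ :=
  Matrix.of fun i m => if m ≤ i then
    (∏ l ∈ (Finset.Iic i).erase m, (t m - t l))⁻¹ * (2 * π * I) else 0

open Metric Finset in
theorem stmt17_detL {k : ℕ} (t : Fin k → ℂ) :
    (stmt17_L t).det = (2 * π * I) ^ k * (∏ i : Fin k, ∏ l ∈ Finset.Iio i, (t i - t l))⁻¹ := by
  rw [Matrix.det_of_lowerTriangular (stmt17_L t)
    (by intro i m h; exact if_neg (not_le.mpr h))]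
  have hdiag : ∀ i : Fin k, stmt17_L t i i = (∏ l ∈ Finset.Iio i, (t i - t l))⁻¹ * (2 * π * I) := by
    intro i; simp [stmt17_L, Finset.Iic_erase]
  rw [Finset.prod_congr rfl (fun i _ => hdiag i), Finset.prod_mul_distrib, Finset.prod_const,
    Finset.card_univ, Fintype.card_fin, Finset.prod_inv_distrib]
  ring

/-- the merging limit of `det{A(x_i,y_j)}/(Δ(x)Δ(y))` as the points merge
to `(x,…,x)` and `(y,…,y)` through configurations with pairwise distinct coordinates,
for `A` analytic on a product of open neighborhoods of `x` and `y`. -/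
theorem stmt_17 (k : ℕ) (hk : 1 ≤ k) (A : ℂ × ℂ → ℂ) (x y : ℂ)
    (U V : Set ℂ) (hU : IsOpen U) (hV : IsOpen V) (hxU : x ∈ U) (hyV : y ∈ V)
    (hA : ∀ p ∈ U ×ˢ V, AnalyticAt ℂ A p) :
    Filter.Tendsto
      (fun p : (Fin k → ℂ) × (Fin k → ℂ) =>
        Matrix.det (Matrix.of fun i j : Fin k => A (p.1 i, p.2 j)) /
          (vandermondeC p.1 * vandermondeC p.2))
      (nhdsWithin ((fun _ => x), (fun _ => y))
        {p : (Fin k → ℂ) × (Fin k → ℂ) | Function.Injective p.1 ∧ Function.Injective p.2})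
      (nhds ((∏ j : Fin k, (((j : ℕ).factorial : ℂ) ^ 2)⁻¹) *
        Matrix.det (Matrix.of fun i j : Fin k =>
          iteratedDeriv (i : ℕ) (fun a => iteratedDeriv (j : ℕ) (fun b => A (a, b)) y) x))) := by
  classical
  have hAOn : AnalyticOnNhd ℂ A (U ×ˢ V) := hA
  obtain ⟨r, hr0, hrU⟩ : ∃ r > 0, Metric.closedBall x r ⊆ U := by
    rcases Metric.nhds_basis_closedBall.mem_iff.mp (hU.mem_nhds hxU) with ⟨r, hr, h⟩
    exact ⟨r, hr, h⟩
  obtain ⟨s, hs0, hsV⟩ : ∃ s > 0, Metric.closedBall y s ⊆ V := by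
    rcases Metric.nhds_basis_closedBall.mem_iff.mp (hV.mem_nhds hyV) with ⟨s, hs, h⟩
    exact ⟨s, hs, h⟩
  have h2pi : (2 * (π : ℂ) * I) ≠ 0 := by simp [Real.pi_ne_zero, Complex.I_ne_zero]
  -- slice differentiability
  have hSliceL : ∀ w ∈ V, DifferentiableOn ℂ (fun z => A (z, w)) U := fun w hw z hz =>
    ((hAOn (z, w) ⟨hz, hw⟩).curry_left).differentiableAt.differentiableWithinAt
  have hSliceR : ∀ z ∈ U, DifferentiableOn ℂ (fun w => A (z, w)) V := fun z hz w hw =>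
    ((hAOn (z, w) ⟨hz, hw⟩).curry_right).differentiableAt.differentiableWithinAt
  -- configuration sets
  set Ωx : Set (Fin k → ℂ) := {v | ∀ m, v m ∈ Metric.ball x r} with hΩxdef
  set Ωy : Set (Fin k → ℂ) := {v | ∀ n, v n ∈ Metric.ball y s} with hΩydef
  have hΩxo : IsOpen Ωx := by
    have : Ωx = Set.pi Set.univ (fun _ : Fin k => Metric.ball x r) := by
      ext v; simp [hΩxdef, Set.mem_pi]
    rw [this]; exact isOpen_set_pi Set.finite_univ (fun _ _ => Metric.isOpen_ball)
  have hΩyo : IsOpen Ωy := by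
    have : Ωy = Set.pi Set.univ (fun _ : Fin k => Metric.ball y s) := by
      ext v; simp [hΩydef, Set.mem_pi]
    rw [this]; exact isOpen_set_pi Set.finite_univ (fun _ _ => Metric.isOpen_ball)
  -- value of H at pairwise distinct configurations
  have hHval : ∀ (j : Fin k) (z : ℂ), z ∈ U → ∀ (yv : Fin k → ℂ), (∀ n, yv n ∈ Metric.ball y s) →
      Set.InjOn yv (Finset.Iic j) →
      stmt17_H A y s j (z, yv) = ∑ n ∈ Finset.Iic j,
        (∏ l ∈ (Finset.Iic j).erase n, (yv n - yv l))⁻¹ * ((2 * π * I) * A (z, yv n)) := by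
    intro j z hz yv hb hinj
    exact stmt17_cauchy_sum hs0 yv _ ⟨j, Finset.mem_Iic.mpr le_rfl⟩ hinj (fun n _ => hb n)
      ((hSliceR z hz).mono hsV)
  -- value of H at the merged configuration
  have hHmerge : ∀ (j : Fin k) (z : ℂ), z ∈ U →
      stmt17_H A y s j (z, fun _ => y)
        = (2 * π * I / ((j : ℕ).factorial : ℂ)) * iteratedDeriv (j : ℕ) (fun b => A (z, b)) y := by
    intro j z hz
    have hc : (∮ w in C(y, s), (∏ n ∈ Finset.Iic j, (w - y)⁻¹) • A (z, w))
        = ∮ w in C(y, s), (w - y)⁻¹ ^ ((j : ℕ) + 1) • A (z, w) := by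
      apply circleIntegral.integral_congr hs0.le
      intro w _
      have hcard : (∏ _n ∈ Finset.Iic j, (w - y)⁻¹) = (w - y)⁻¹ ^ ((j : ℕ) + 1) := by
        rw [Finset.prod_const]
        congr 1
        simpa using Fin.card_Iic j
      show (∏ _n ∈ Finset.Iic j, (w - y)⁻¹) • A (z, w) = (w - y)⁻¹ ^ ((j : ℕ) + 1) • A (z, w)
      rw [hcard]
    have := stmt17_cauchy_deriv' hs0 ((hSliceR z hz).mono hsV) (j : ℕ)
    calc stmt17_H A y s j (z, fun _ => y)
        = ∮ w in C(y, s), (w - y)⁻¹ ^ ((j : ℕ) + 1) • A (z, w) := hc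
      _ = _ := this
  -- value of F at pairwise distinct configurations
  have hFval : ∀ (i j : Fin k) (p : (Fin k → ℂ) × (Fin k → ℂ)), p ∈ Ωx ×ˢ Ωy →
      Function.Injective p.1 → Function.Injective p.2 →
      stmt17_F A x y r s i j p = ∑ m ∈ Finset.Iic i, ∑ n ∈ Finset.Iic j,
        ((∏ l ∈ (Finset.Iic i).erase m, (p.1 m - p.1 l))⁻¹ * (2 * π * I))
          * (((∏ l ∈ (Finset.Iic j).erase n, (p.2 n - p.2 l))⁻¹ * (2 * π * I))
            * A (p.1 m, p.2 n)) := by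
    intro i j p hp h1 h2
    have hxvU : ∀ m : Fin k, p.1 m ∈ U := fun m => hrU (Metric.ball_subset_closedBall (hp.1 m))
    have hyvV : ∀ n : Fin k, p.2 n ∈ V := fun n => hsV (Metric.ball_subset_closedBall (hp.2 n))
    have hHsum : ∀ z ∈ Metric.closedBall x r, stmt17_H A y s j (z, p.2)
        = ∑ n ∈ Finset.Iic j,
            (∏ l ∈ (Finset.Iic j).erase n, (p.2 n - p.2 l))⁻¹ * ((2 * π * I) * A (z, p.2 n)) :=
      fun z hz => hHval j z (hrU hz) p.2 hp.2 h2.injOn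
    have hg : DifferentiableOn ℂ (fun z => stmt17_H A y s j (z, p.2)) (Metric.closedBall x r) := by
      have hsum : DifferentiableOn ℂ (fun z => ∑ n ∈ Finset.Iic j,
          (∏ l ∈ (Finset.Iic j).erase n, (p.2 n - p.2 l))⁻¹ * ((2 * π * I) * A (z, p.2 n)))
          (Metric.closedBall x r) := by
        apply DifferentiableOn.fun_sum
        intro n _
        exact (((hSliceL (p.2 n) (hyvV n)).mono hrU).const_mul (2 * π * I)).const_mul _
      exact hsum.congr hHsum
    have hmain := stmt17_cauchy_sum hr0 p.1 (Finset.Iic i) ⟨i, Finset.mem_Iic.mpr le_rfl⟩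
      h1.injOn (fun m _ => hp.1 m) hg
    calc stmt17_F A x y r s i j p
        = ∑ m ∈ Finset.Iic i, (∏ l ∈ (Finset.Iic i).erase m, (p.1 m - p.1 l))⁻¹
            * ((2 * π * I) * stmt17_H A y s j (p.1 m, p.2)) := hmain
      _ = _ := by
          refine Finset.sum_congr rfl fun m hm => ?_
          rw [hHsum (p.1 m) (Metric.ball_subset_closedBall (hp.1 m)), Finset.mul_sum,
            Finset.mul_sum]
          exact Finset.sum_congr rfl fun n hn => by ring
  -- value of F at the merged configuration
  have hFmerge : ∀ i j : Fin k,
      stmt17_F A x y r s i j ((fun _ => x), (fun _ => y))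
        = ((2 * π * I) * (((i : ℕ).factorial : ℂ))⁻¹)
          * (((2 * π * I) * (((j : ℕ).factorial : ℂ))⁻¹)
            * iteratedDeriv (i : ℕ) (fun a => iteratedDeriv (j : ℕ) (fun b => A (a, b)) y) x) := by
    intro i j
    obtain ⟨Aj, hAj, hAjeq⟩ := stmt17_partialAj hV hAOn (j : ℕ)
    have hAjslice : DifferentiableOn ℂ (fun z => Aj (z, y)) (Metric.closedBall x r) :=
      fun z hz => ((hAj (z, y) ⟨hrU hz, hyV⟩).curry_left).differentiableAt.differentiableWithinAt
    have hB : DifferentiableOn ℂ (fun z => iteratedDeriv (j : ℕ) (fun b => A (z, b)) y)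
        (Metric.closedBall x r) :=
      hAjslice.congr fun z hz => (hAjeq z (hrU hz) y hyV).symm
    have hc : stmt17_F A x y r s i j ((fun _ => x), (fun _ => y))
        = ∮ z in C(x, r), (2 * π * I / ((j : ℕ).factorial : ℂ))
            • ((z - x)⁻¹ ^ ((i : ℕ) + 1) • iteratedDeriv (j : ℕ) (fun b => A (z, b)) y) := by
      apply circleIntegral.integral_congr hr0.le
      intro z hz
      have hzU : z ∈ U := hrU (Metric.sphere_subset_closedBall hz)
      have hpr : (∏ _m ∈ Finset.Iic i, (z - x)⁻¹) = (z - x)⁻¹ ^ ((i : ℕ) + 1) := by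
        rw [Finset.prod_const]
        congr 1
        simpa using Fin.card_Iic i
      show (∏ m ∈ Finset.Iic i, (z - x)⁻¹) • stmt17_H A y s j (z, fun _ => y) = _
      rw [hpr, hHmerge j z hzU]
      simp only [smul_eq_mul]
      ring
    rw [hc, circleIntegral.integral_smul, stmt17_cauchy_deriv' hr0 hB (i : ℕ)]
    simp only [smul_eq_mul]
    field_simp
  -- continuity of H on U ×ˢ Ωy
  have hHcont : ∀ j : Fin k, ContinuousOn (stmt17_H A y s j) (U ×ˢ Ωy) := by
    intro j
    rw [continuousOn_iff_continuous_restrict]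
    apply stmt17_cont_circle (f := fun (q : ↥(U ×ˢ Ωy)) w =>
      (∏ n ∈ Finset.Iic j, (w - (q : ℂ × (Fin k → ℂ)).2 n)⁻¹) • A ((q : ℂ × (Fin k → ℂ)).1, w))
    apply Continuous.fun_smul
    · apply continuous_finset_prod
      intro n _
      apply Continuous.inv₀
      · exact ((continuous_circleMap y s).comp continuous_snd).sub
          ((continuous_apply n).comp (continuous_snd.comp (continuous_subtype_val.comp
            continuous_fst)))
      · intro q
        refine sub_ne_zero.mpr fun heq => ?_
        have h1 : circleMap y s q.2 ∈ Metric.sphere y s := circleMap_mem_sphere y hs0.le q.2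
        have h2 : (q.1 : ℂ × (Fin k → ℂ)).2 n ∈ Metric.ball y s := q.1.2.2 n
        rw [heq] at h1
        exact absurd (Metric.mem_ball.mp h2) (by simp [Metric.mem_sphere.mp h1])
    · apply hAOn.continuousOn.comp_continuous
      · exact (continuous_fst.comp (continuous_subtype_val.comp continuous_fst)).prodMk
          ((continuous_circleMap y s).comp continuous_snd)
      · intro q
        exact ⟨q.1.2.1, hsV (Metric.sphere_subset_closedBall
          (circleMap_mem_sphere y hs0.le q.2))⟩
  -- continuity of F on Ωx ×ˢ Ωy
  have hFcont : ∀ i j : Fin k, ContinuousOn (stmt17_F A x y r s i j) (Ωx ×ˢ Ωy) := by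
    intro i j
    rw [continuousOn_iff_continuous_restrict]
    apply stmt17_cont_circle (f := fun (q : ↥(Ωx ×ˢ Ωy)) z =>
      (∏ m ∈ Finset.Iic i, (z - ((q : (Fin k → ℂ) × (Fin k → ℂ)).1 m))⁻¹)
        • stmt17_H A y s j (z, (q : (Fin k → ℂ) × (Fin k → ℂ)).2))
    apply Continuous.fun_smul
    · apply continuous_finset_prod
      intro m _
      apply Continuous.inv₀
      · exact ((continuous_circleMap x r).comp continuous_snd).sub
          ((continuous_apply m).comp (continuous_fst.comp (continuous_subtype_val.comp
            continuous_fst)))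
      · intro q
        refine sub_ne_zero.mpr fun heq => ?_
        have h1 : circleMap x r q.2 ∈ Metric.sphere x r := circleMap_mem_sphere x hr0.le q.2
        have h2 : (q.1 : (Fin k → ℂ) × (Fin k → ℂ)).1 m ∈ Metric.ball x r := q.1.2.1 m
        rw [heq] at h1
        exact absurd (Metric.mem_ball.mp h2) (by simp [Metric.mem_sphere.mp h1])
    · apply (hHcont j).comp_continuous
      · exact ((continuous_circleMap x r).comp continuous_snd).prodMk
          (continuous_snd.comp (continuous_subtype_val.comp continuous_fst))
      · intro q
        exact ⟨hrU (Metric.sphere_subset_closedBall (circleMap_mem_sphere x hr0.le q.2)),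
          q.1.2.2⟩
  -- the merged point
  set pt : (Fin k → ℂ) × (Fin k → ℂ) := ((fun _ => x), (fun _ => y)) with hptdef
  have hptΩ : pt ∈ Ωx ×ˢ Ωy := ⟨fun m => Metric.mem_ball_self hr0, fun n => Metric.mem_ball_self hs0⟩
  have hΩnhds : Ωx ×ˢ Ωy ∈ nhds pt := (hΩxo.prod hΩyo).mem_nhds hptΩ
  -- continuity of the determinant of the F matrix
  have hFmatcont : ContinuousAt (fun p => Matrix.of fun i j : Fin k => stmt17_F A x y r s i j p) pt := by
    apply continuousAt_pi.mpr
    intro i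
    apply continuousAt_pi.mpr
    intro j
    exact (hFcont i j).continuousAt hΩnhds
  have hGcont : ContinuousAt (fun p => (Matrix.of fun i j : Fin k => stmt17_F A x y r s i j p).det) pt :=
    ((Continuous.matrix_det continuous_id).continuousAt).comp hFmatcont
  -- matrix factorization at distinct configurations
  have hIic : ∀ i : Fin k, Finset.Iic i = Finset.univ.filter (fun m => m ≤ i) := by
    intro i; ext m; simp
  have hFmat : ∀ p : (Fin k → ℂ) × (Fin k → ℂ), p ∈ Ωx ×ˢ Ωy →
      Function.Injective p.1 → Function.Injective p.2 →
      (Matrix.of fun i j : Fin k => stmt17_F A x y r s i j p)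
        = stmt17_L p.1 * (Matrix.of fun m n : Fin k => A (p.1 m, p.2 n)) * (stmt17_L p.2).transpose := by
    intro p hp h1 h2
    ext i j
    have inner : ∀ n : Fin k,
        (stmt17_L p.1 * Matrix.of fun m n' : Fin k => A (p.1 m, p.2 n')) i n
          = ∑ m ∈ Finset.Iic i,
              ((∏ l ∈ (Finset.Iic i).erase m, (p.1 m - p.1 l))⁻¹ * (2 * π * I))
                * A (p.1 m, p.2 n) := by
      intro n
      rw [Matrix.mul_apply, hIic i, Finset.sum_filter]
      simp only [← hIic i]
      refine Finset.sum_congr rfl fun m _ => ?_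
      simp only [stmt17_L, Matrix.of_apply, ite_mul, zero_mul]
    rw [Matrix.of_apply, hFval i j p hp h1 h2, Matrix.mul_apply]
    calc (∑ m ∈ Finset.Iic i, ∑ n ∈ Finset.Iic j,
            ((∏ l ∈ (Finset.Iic i).erase m, (p.1 m - p.1 l))⁻¹ * (2 * π * I))
              * (((∏ l ∈ (Finset.Iic j).erase n, (p.2 n - p.2 l))⁻¹ * (2 * π * I))
                * A (p.1 m, p.2 n)))
        = ∑ n ∈ Finset.Iic j,
            (∑ m ∈ Finset.Iic i,
              ((∏ l ∈ (Finset.Iic i).erase m, (p.1 m - p.1 l))⁻¹ * (2 * π * I))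
                * A (p.1 m, p.2 n))
              * ((∏ l ∈ (Finset.Iic j).erase n, (p.2 n - p.2 l))⁻¹ * (2 * π * I)) := by
          rw [Finset.sum_comm]
          refine Finset.sum_congr rfl fun n _ => ?_
          rw [Finset.sum_mul]
          exact Finset.sum_congr rfl fun m _ => by ring
      _ = _ := by
          rw [hIic j, Finset.sum_filter]
          simp only [← hIic j]
          refine Finset.sum_congr rfl fun n _ => ?_
          rw [Matrix.transpose_apply]
          have hLval : stmt17_L p.2 j n = if n ≤ j then
              (∏ l ∈ (Finset.Iic j).erase n, (p.2 n - p.2 l))⁻¹ * (2 * π * I) else 0 := rfl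
          rw [hLval, inner n, mul_ite, mul_zero]
  -- determinant at the merged point
  set Dm : Matrix (Fin k) (Fin k) ℂ := Matrix.of fun i j : Fin k =>
      iteratedDeriv (i : ℕ) (fun a => iteratedDeriv (j : ℕ) (fun b => A (a, b)) y) x with hDmdef
  have hGpt : (Matrix.of fun i j : Fin k => stmt17_F A x y r s i j pt).det
      = (∏ i : Fin k, (2 * π * I) * (((i : ℕ).factorial : ℂ))⁻¹)
        * ((∏ j : Fin k, (2 * π * I) * (((j : ℕ).factorial : ℂ))⁻¹) * Dm.det) := by
    have hmat : (Matrix.of fun i j : Fin k => stmt17_F A x y r s i j pt)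
        = Matrix.of fun i j : Fin k => ((2 * π * I) * (((i : ℕ).factorial : ℂ))⁻¹)
            * ((((2 * π * I) * (((j : ℕ).factorial : ℂ))⁻¹)) * Dm i j) := by
      ext i j; exact hFmerge i j
    have e1 := Matrix.det_mul_column (fun i : Fin k => (2 * π * I) * (((i : ℕ).factorial : ℂ))⁻¹)
      (Matrix.of fun i j : Fin k => ((2 * π * I) * (((j : ℕ).factorial : ℂ))⁻¹) * Dm i j)
    have e2 := Matrix.det_mul_row (fun j : Fin k => (2 * π * I) * (((j : ℕ).factorial : ℂ))⁻¹) Dm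
    rw [hmat]
    exact e1.trans (by rw [e2])
  have h2pk : ((2 * (π : ℂ) * I)) ^ k ≠ 0 := pow_ne_zero _ h2pi
  have hcan : (((2 * (π : ℂ) * I)) ^ (2 * k))⁻¹ * (((2 * π * I)) ^ k * ((2 * π * I)) ^ k) = 1 := by
    rw [show 2 * k = k + k from two_mul k, pow_add]
    exact inv_mul_cancel₀ (mul_ne_zero h2pk h2pk)
  -- eventual equality on the punctured filter
  have hev : (fun p : (Fin k → ℂ) × (Fin k → ℂ) =>
        (((2 * π * I)) ^ (2 * k))⁻¹ * (Matrix.of fun i j : Fin k => stmt17_F A x y r s i j p).det)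
      =ᶠ[nhdsWithin pt
          {p : (Fin k → ℂ) × (Fin k → ℂ) | Function.Injective p.1 ∧ Function.Injective p.2}]
        (fun p => Matrix.det (Matrix.of fun i j : Fin k => A (p.1 i, p.2 j)) /
          (vandermondeC p.1 * vandermondeC p.2)) := by
    filter_upwards [self_mem_nhdsWithin, mem_nhdsWithin_of_mem_nhds hΩnhds] with p hpS hpΩ
    rw [hFmat p hpΩ hpS.1 hpS.2, Matrix.det_mul, Matrix.det_mul, Matrix.det_transpose,
      stmt17_detL, stmt17_detL, ← stmt17_vdm, ← stmt17_vdm]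
    rw [div_eq_mul_inv, mul_inv]
    linear_combination ((vandermondeC p.1)⁻¹ * (vandermondeC p.2)⁻¹
      * (Matrix.of fun i j : Fin k => A (p.1 i, p.2 j)).det) * hcan
  -- the limit value
  have hlim : (((2 * π * I)) ^ (2 * k))⁻¹
        * (Matrix.of fun i j : Fin k => stmt17_F A x y r s i j pt).det
      = (∏ j : Fin k, (((j : ℕ).factorial : ℂ) ^ 2)⁻¹) * Dm.det := by
    rw [hGpt]
    have h1 : (∏ i : Fin k, (2 * π * I) * (((i : ℕ).factorial : ℂ))⁻¹)
        = ((2 * π * I)) ^ k * ∏ i : Fin k, (((i : ℕ).factorial : ℂ))⁻¹ := by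
      rw [Finset.prod_mul_distrib, Finset.prod_const, Finset.card_univ, Fintype.card_fin]
    have h2 : (∏ j : Fin k, (((j : ℕ).factorial : ℂ) ^ 2)⁻¹)
        = (∏ j : Fin k, (((j : ℕ).factorial : ℂ))⁻¹) * ∏ j : Fin k, (((j : ℕ).factorial : ℂ))⁻¹ := by
      rw [← Finset.prod_mul_distrib]
      exact Finset.prod_congr rfl fun j _ => by rw [sq, mul_inv]
    rw [h1, h2]
    linear_combination ((∏ i : Fin k, (((i : ℕ).factorial : ℂ))⁻¹)
      * (∏ i : Fin k, (((i : ℕ).factorial : ℂ))⁻¹) * Dm.det) * hcan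
  have htend : Filter.Tendsto (fun p : (Fin k → ℂ) × (Fin k → ℂ) =>
        (((2 * π * I)) ^ (2 * k))⁻¹ * (Matrix.of fun i j : Fin k => stmt17_F A x y r s i j p).det)
      (nhdsWithin pt
        {p : (Fin k → ℂ) × (Fin k → ℂ) | Function.Injective p.1 ∧ Function.Injective p.2})
      (nhds ((((2 * π * I)) ^ (2 * k))⁻¹
        * (Matrix.of fun i j : Fin k => stmt17_F A x y r s i j pt).det)) :=
    ((continuousAt_const.mul hGcont).continuousWithinAt).tendsto
  have hfinal := Filter.Tendsto.congr' hev htend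
  rw [hlim] at hfinal
  exact hfinal
end
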